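/- S-lemma (S-procedure): Let f(u) = uᵀA u + 2aᵀu + α and g(u) = uᵀB u + 2bᵀu + β be quadratic functions with some ū satisfying g(ū) > 0. Then f(u) ≥ 0 for all u with g(u) ≥ 0 if and only if there exists l ≥ 0 such that the block matrix [[A − lB, a − lb], [(a − lb)ᵀ, α − lβ]] is positive semidefinite. -/

import Mathlib

open Matrix

variable {ι : Type*} [Fintype ι]

def qf (P : Matrix ι ι ℝ) (x : ι → ℝ) : ℝ := x ⬝ᵥ (P *ᵥ x)

def qcross (P : Matrix ι ι ℝ) (x y : ι → ℝ) : ℝ := x ⬝ᵥ (P *ᵥ y) + y ⬝ᵥ (P *ᵥ x)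


lemma qf_smul (P : Matrix ι ι ℝ) (t : ℝ) (x : ι → ℝ) : qf P (t • x) = t ^ 2 * qf P x := by
  simp [qf, mulVec_smul, smul_dotProduct, dotProduct_smul, smul_eq_mul]; ring

lemma qf_zero (P : Matrix ι ι ℝ) : qf P (0 : ι → ℝ) = 0 := by
  simp [qf]

lemma qf_neg (P : Matrix ι ι ℝ) (x : ι → ℝ) : qf P (-x) = qf P x := by
  have := qf_smul P (-1) x
  simpa using this

lemma qf_comb (P : Matrix ι ι ℝ) (s t : ℝ) (x y : ι → ℝ) :
    qf P (s • x + t • y) = s ^ 2 * qf P x + s * t * qcross P x y + t ^ 2 * qf P y := by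
  simp [qf, qcross, mulVec_add, mulVec_smul, add_dotProduct, dotProduct_add,
    smul_dotProduct, dotProduct_smul, smul_eq_mul]
  ring

lemma qf_lin (P Q : Matrix ι ι ℝ) (c1 c2 : ℝ) (x : ι → ℝ) :
    qf (c1 • P + c2 • Q) x = c1 * qf P x + c2 * qf Q x := by
  simp [qf, add_mulVec, smul_mulVec, dotProduct_add, dotProduct_smul, smul_eq_mul]

lemma qcross_lin (P Q : Matrix ι ι ℝ) (c1 c2 : ℝ) (x y : ι → ℝ) :
    qcross (c1 • P + c2 • Q) x y = c1 * qcross P x y + c2 * qcross Q x y := by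
  simp [qcross, add_mulVec, smul_mulVec, dotProduct_add, dotProduct_smul, smul_eq_mul]
  ring

lemma qcross_neg_right (P : Matrix ι ι ℝ) (x y : ι → ℝ) : qcross P x (-y) = -qcross P x y := by
  simp [qcross, mulVec_neg, dotProduct_neg, neg_dotProduct]
  ring




/-- Core path/IVT step of Dines' theorem. -/
lemma dines_aux (P Q : Matrix ι ι ℝ) (c1 c2 γ z1 : ℝ) (hc2 : c2 ≠ 0) (hγ : 0 < γ)
    (u v : ι → ℝ)
    (hu : c1 * qf P u + c2 * qf Q u = γ) (hv : c1 * qf P v + c2 * qf Q v = γ)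
    (hcr : 0 ≤ c1 * qcross P u v + c2 * qcross Q u v)
    (hz : z1 ∈ Set.uIcc (qf P u) (qf P v)) :
    ∃ x, qf P x = z1 ∧ qf Q x = (γ - c1 * z1) / c2 := by
  set R : Matrix ι ι ℝ := c1 • P + c2 • Q with hR
  have hRu : qf R u = γ := by rw [qf_lin]; exact hu
  have hRv : qf R v = γ := by rw [qf_lin]; exact hv
  have hRcr : 0 ≤ qcross R u v := by rw [qcross_lin]; exact hcr
  -- the path
  set w : ℝ → (ι → ℝ) := fun θ => (1 - θ) • u + θ • v with hw
  have hRw : ∀ θ, qf R (w θ) = (1-θ)^2 * γ + (1-θ)*θ * qcross R u v + θ^2 * γ := by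
    intro θ; rw [hw]; rw [qf_comb, hRu, hRv]
  have hRwpos : ∀ θ ∈ Set.Icc (0:ℝ) 1, 0 < qf R (w θ) := by
    intro θ hθ
    rw [hRw]
    rcases hθ with ⟨h0, h1⟩
    nlinarith [mul_nonneg (mul_nonneg (by linarith : (0:ℝ) ≤ 1 - θ) h0) hRcr,
      sq_nonneg (1 - 2*θ), hγ]
  have hPw : ∀ θ, qf P (w θ) = (1-θ)^2 * qf P u + (1-θ)*θ * qcross P u v + θ^2 * qf P v := by
    intro θ; rw [hw]; rw [qf_comb]
  -- the continuous function for IVT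
  set φ : ℝ → ℝ := fun θ => γ * qf P (w θ) / qf R (w θ) with hφ
  have hcont : ContinuousOn φ (Set.Icc (0:ℝ) 1) := by
    apply ContinuousOn.div
    · apply Continuous.continuousOn
      have : Continuous fun θ : ℝ => qf P (w θ) := by
        simp only [hPw]; fun_prop
      fun_prop
    · apply Continuous.continuousOn
      have : Continuous fun θ : ℝ => qf R (w θ) := by
        simp only [hRw]; fun_prop
      exact this
    · intro θ hθ; exact ne_of_gt (hRwpos θ hθ)
  have hφ0 : φ 0 = qf P u := by
    simp only [hφ]
    rw [hRw, hPw]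
    field_simp
    ring
  have hφ1 : φ 1 = qf P v := by
    simp only [hφ]
    rw [hRw, hPw]
    field_simp
    ring
  have hz' : z1 ∈ Set.uIcc (φ 0) (φ 1) := by rw [hφ0, hφ1]; exact hz
  have := intermediate_value_uIcc (a := (0:ℝ)) (b := 1) (f := φ)
    (by rw [Set.uIcc_of_le (zero_le_one)]; exact hcont)
  obtain ⟨θ, hθmem, hθ⟩ := this hz'
  rw [Set.uIcc_of_le (zero_le_one)] at hθmem
  -- the witness
  have hpos := hRwpos θ hθmem
  have hratio : 0 ≤ γ / qf R (w θ) := le_of_lt (div_pos hγ hpos)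
  refine ⟨Real.sqrt (γ / qf R (w θ)) • w θ, ?_, ?_⟩
  · rw [qf_smul, Real.sq_sqrt hratio]
    rw [div_mul_eq_mul_div, mul_comm, ← hθ]
    simp only [hφ]
    ring
  · have hQx : qf R (Real.sqrt (γ / qf R (w θ)) • w θ) = γ := by
      rw [qf_smul, Real.sq_sqrt hratio]
      field_simp
    rw [qf_lin] at hQx
    have hPx : qf P (Real.sqrt (γ / qf R (w θ)) • w θ) = z1 := by
      rw [qf_smul, Real.sq_sqrt hratio]
      rw [div_mul_eq_mul_div, mul_comm, ← hθ]
      simp only [hφ]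
      ring
    rw [hPx] at hQx
    rw [eq_div_iff hc2]
    linarith



lemma comb_mem_uIcc {θ η x y : ℝ} (hθ : 0 ≤ θ) (hη : 0 ≤ η) (hs : θ + η = 1) :
    θ * x + η * y ∈ Set.uIcc x y := by
  have hθ1 : θ = 1 - η := by linarith
  subst hθ1
  rw [Set.uIcc, Set.mem_Icc]
  constructor
  · rcases le_total x y with h | h
    · rw [min_eq_left h]; nlinarith [mul_nonneg hη (sub_nonneg.mpr h)]
    · rw [min_eq_right h]; nlinarith [mul_nonneg hθ (sub_nonneg.mpr h)]
  · rcases le_total x y with h | h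
    · rw [max_eq_right h]; nlinarith [mul_nonneg hθ (sub_nonneg.mpr h)]
    · rw [max_eq_left h]; nlinarith [mul_nonneg hη (sub_nonneg.mpr h)]

/-- Dines core step assuming the separating line has positive offset. -/
lemma dines_core (P Q : Matrix ι ι ℝ) (u v : ι → ℝ) (θ η c1 c2 γ : ℝ)
    (hθ : 0 ≤ θ) (hη : 0 ≤ η) (hs : θ + η = 1) (hγ : 0 < γ)
    (h1 : c1 * qf P u + c2 * qf Q u = γ) (h2 : c1 * qf P v + c2 * qf Q v = γ) :
    ∃ x, qf P x = θ * qf P u + η * qf P v ∧ qf Q x = θ * qf Q u + η * qf Q v := by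
  -- wlog the cross term is nonnegative, replacing v by -v
  rcases le_or_gt 0 (c1 * qcross P u v + c2 * qcross Q u v) with hcr | hcr
  · -- main case, split on which coefficient is nonzero
    by_cases hc2 : c2 ≠ 0
    · obtain ⟨x, hx1, hx2⟩ := dines_aux P Q c1 c2 γ (θ * qf P u + η * qf P v) hc2 hγ u v h1 h2
        hcr (comb_mem_uIcc hθ hη hs)
      refine ⟨x, hx1, ?_⟩
      rw [hx2, div_eq_iff hc2]
      nlinarith
    · push_neg at hc2
      subst hc2
      have hc1 : c1 ≠ 0 := by intro h; rw [h] at h1; simp at h1; linarith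
      obtain ⟨x, hx1, hx2⟩ := dines_aux Q P 0 c1 γ (θ * qf Q u + η * qf Q v) hc1 hγ u v
        (by linarith) (by linarith) (by linarith) (comb_mem_uIcc hθ hη hs)
      refine ⟨x, ?_, hx1⟩
      rw [hx2, div_eq_iff hc1]
      nlinarith
  · -- replace v by -v
    have hcr' : 0 ≤ c1 * qcross P u (-v) + c2 * qcross Q u (-v) := by
      rw [qcross_neg_right, qcross_neg_right]; linarith
    have h2' : c1 * qf P (-v) + c2 * qf Q (-v) = γ := by rw [qf_neg, qf_neg]; exact h2
    by_cases hc2 : c2 ≠ 0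
    · obtain ⟨x, hx1, hx2⟩ := dines_aux P Q c1 c2 γ (θ * qf P u + η * qf P v) hc2 hγ u (-v) h1
        h2' hcr' (by rw [qf_neg]; exact comb_mem_uIcc hθ hη hs)
      refine ⟨x, hx1, ?_⟩
      rw [hx2, div_eq_iff hc2]
      nlinarith
    · push_neg at hc2
      subst hc2
      have hc1 : c1 ≠ 0 := by intro h; rw [h] at h1; simp at h1; linarith
      obtain ⟨x, hx1, hx2⟩ := dines_aux Q P 0 c1 γ (θ * qf Q u + η * qf Q v) hc1 hγ u (-v)
        (by linarith) (by simp only [qf_neg]; linarith) (by linarith)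
        (by rw [qf_neg]; exact comb_mem_uIcc hθ hη hs)
      refine ⟨x, ?_, hx1⟩
      rw [hx2, div_eq_iff hc1]
      nlinarith

/-- Dines' theorem: the joint range of two real quadratic forms is convex. -/
theorem dines (P Q : Matrix ι ι ℝ) :
    Convex ℝ {p : ℝ × ℝ | ∃ x, (qf P x, qf Q x) = p} := by
  rintro p ⟨u, rfl⟩ q ⟨v, rfl⟩ θ η hθ hη hs
  simp only [Set.mem_setOf_eq, Prod.smul_mk, smul_eq_mul, Prod.mk_add_mk]
  -- cone property
  have cone : ∀ (t : ℝ), 0 ≤ t → ∀ x : ι → ℝ,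
      ∃ y, qf P y = t * qf P x ∧ qf Q y = t * qf Q x := by
    intro t ht x
    refine ⟨Real.sqrt t • x, ?_, ?_⟩ <;> rw [qf_smul, Real.sq_sqrt ht]
  by_cases hdet : qf P u * qf Q v - qf Q u * qf P v = 0
  · -- collinear case
    by_cases hPu : qf P u = 0 ∧ qf Q u = 0
    · obtain ⟨y, hy1, hy2⟩ := cone η hη v
      exact ⟨y, by rw [hy1, hy2, hPu.1, hPu.2]; simp⟩
    · -- y1 ≠ 0 ; get μ with y2 = μ • y1
      have hmu : ∃ μ : ℝ, qf P v = μ * qf P u ∧ qf Q v = μ * qf Q u := by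
        by_cases hP : qf P u = 0
        · have hQ : qf Q u ≠ 0 := fun h => hPu ⟨hP, h⟩
          have hqq : qf Q u * qf P v = 0 := by rw [hP] at hdet; linarith
          have : qf P v = 0 := by
            rcases mul_eq_zero.mp hqq with h | h
            · exact absurd h hQ
            · exact h
          exact ⟨qf Q v / qf Q u, by rw [this, hP]; ring, by field_simp⟩
        · refine ⟨qf P v / qf P u, by field_simp, ?_⟩
          field_simp
          nlinarith
      obtain ⟨μ, hμ1, hμ2⟩ := hmu
      rcases le_or_gt 0 (θ + η * μ) with hc | hc
      · obtain ⟨y, hy1, hy2⟩ := cone (θ + η * μ) hc u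
        refine ⟨y, ?_⟩
        rw [hy1, hy2, hμ1, hμ2, Prod.mk.injEq]
        exact ⟨by ring, by ring⟩
      · -- θ + ημ < 0 forces μ < 0
        have hμneg : μ < 0 := by nlinarith
        have hμne : μ ≠ 0 := ne_of_lt hμneg
        have hc' : 0 ≤ θ / μ + η := by
          have heq : θ / μ + η = (θ + η * μ) / μ := by field_simp
          rw [heq]
          exact div_nonneg_iff.mpr (Or.inr ⟨hc.le, hμneg.le⟩)
        obtain ⟨y, hy1, hy2⟩ := cone (θ / μ + η) hc' v
        refine ⟨y, ?_⟩
        rw [hy1, hy2, hμ1, hμ2, Prod.mk.injEq]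
        constructor <;> field_simp
  · -- independent case
    set c1 := qf Q v - qf Q u with hc1
    set c2 := qf P u - qf P v with hc2
    set γ := qf P u * qf Q v - qf Q u * qf P v with hγdef
    have h1 : c1 * qf P u + c2 * qf Q u = γ := by rw [hc1, hc2, hγdef]; ring
    have h2 : c1 * qf P v + c2 * qf Q v = γ := by rw [hc1, hc2, hγdef]; ring
    rcases lt_or_gt_of_ne hdet with hlt | hgt
    · obtain ⟨x, hx1, hx2⟩ := dines_core P Q u v θ η (-c1) (-c2) (-γ) hθ hη hs
        (by rw [hγdef]; linarith) (by linarith) (by linarith)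
      exact ⟨x, by rw [hx1, hx2]⟩
    · obtain ⟨x, hx1, hx2⟩ := dines_core P Q u v θ η c1 c2 γ hθ hη hs
        (by rw [hγdef]; exact hgt) h1 h2
      exact ⟨x, by rw [hx1, hx2]⟩



/-- Homogeneous S-lemma. -/
theorem homog_s_lemma (P Q : Matrix ι ι ℝ) (slater : ∃ x, 0 < qf Q x)
    (h : ∀ x, 0 ≤ qf Q x → 0 ≤ qf P x) :
    ∃ l : ℝ, 0 ≤ l ∧ ∀ x, 0 ≤ qf P x - l * qf Q x := by
  set K : Set (ℝ × ℝ) := {p | ∃ x, (qf P x, qf Q x) = p} with hK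
  set C : Set (ℝ × ℝ) := {p | p.1 < 0 ∧ 0 < p.2} with hC
  have hCconv : Convex ℝ C := by
    have h1 : Convex ℝ {p : ℝ × ℝ | p.1 < 0} :=
      convex_halfSpace_lt (IsLinearMap.mk (fun a b => rfl) (fun c a => rfl)) 0
    have h2 : Convex ℝ {p : ℝ × ℝ | 0 < p.2} :=
      convex_halfSpace_gt (IsLinearMap.mk (fun a b => rfl) (fun c a => rfl)) 0
    exact h1.inter h2
  have hCopen : IsOpen C := by
    apply IsOpen.inter
    · exact isOpen_lt continuous_fst continuous_const
    · exact isOpen_lt continuous_const continuous_snd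
  have hdisj : Disjoint C K := by
    rw [Set.disjoint_left]
    rintro p ⟨hp1, hp2⟩ ⟨x, rfl⟩
    exact absurd (h x (le_of_lt hp2)) (not_le.mpr hp1)
  obtain ⟨f, σ, hf1, hf2⟩ := geometric_hahn_banach_open hCconv hCopen (dines P Q) hdisj
  set c1 : ℝ := f (1, 0) with hc1
  set c2 : ℝ := f (0, 1) with hc2
  have hf : ∀ s t : ℝ, f (s, t) = s * c1 + t * c2 := by
    intro s t
    have : (s, t) = s • ((1:ℝ), (0:ℝ)) + t • ((0:ℝ), (1:ℝ)) := by
      simp [Prod.ext_iff]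
    rw [this, map_add, _root_.map_smul, _root_.map_smul, smul_eq_mul, smul_eq_mul]
  have hKf : ∀ x, σ ≤ c1 * qf P x + c2 * qf Q x := by
    intro x
    have := hf2 _ ⟨x, rfl⟩
    rwa [hf, mul_comm (qf P x), mul_comm (qf Q x)] at this
  have hσ0 : σ ≤ 0 := by
    have := hKf 0
    rw [qf_zero, qf_zero] at this
    linarith
  -- c1 ≥ 0
  have hc1nn : 0 ≤ c1 := by
    by_contra hneg
    push_neg at hneg
    set s : ℝ := min ((σ - c2) / c1) (-1) with hs
    have hsneg : s < 0 := lt_of_le_of_lt (min_le_right _ _) (by norm_num)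
    have := hf1 (s, 1) ⟨hsneg, one_pos⟩
    rw [hf] at this
    have hs1 : s ≤ (σ - c2) / c1 := min_le_left _ _
    have h3 := mul_le_mul_of_nonpos_right hs1 hneg.le
    rw [div_mul_cancel₀ _ (ne_of_lt hneg)] at h3
    linarith
  -- c2 ≤ 0
  have hc2np : c2 ≤ 0 := by
    by_contra hpos
    push_neg at hpos
    set t : ℝ := max ((σ + c1) / c2) 1 with ht
    have htpos : (0:ℝ) < t := lt_of_lt_of_le one_pos (le_max_right _ _)
    have := hf1 (-1, t) ⟨by norm_num, htpos⟩
    rw [hf] at this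
    have ht1 : (σ + c1) / c2 ≤ t := le_max_left _ _
    have h3 := mul_le_mul_of_nonneg_right ht1 hpos.le
    rw [div_mul_cancel₀ _ (ne_of_gt hpos)] at h3
    linarith
  -- σ ≥ 0
  have hσnn : 0 ≤ σ := by
    by_contra hneg
    push_neg at hneg
    rcases eq_or_lt_of_le (by linarith : c2 - c1 ≤ 0) with heq | hlt
    · have := hf1 (-1, 1) ⟨by norm_num, one_pos⟩
      rw [hf] at this
      nlinarith
    · set ε : ℝ := σ / (c2 - c1) with hε
      have hεpos : 0 < ε := div_pos_of_neg_of_neg hneg hlt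
      have h4 := hf1 (-ε, ε) ⟨show -ε < 0 by linarith, hεpos⟩
      rw [hf] at h4
      have h5 : ε * (c2 - c1) = σ := by
        rw [hε, div_mul_cancel₀ _ (ne_of_lt hlt)]
      nlinarith
  -- conclude
  have hc1pos : 0 < c1 := by
    rcases eq_or_lt_of_le hc1nn with heq | hlt
    · exfalso
      -- c1 = 0; then c2 < 0 impossible by Slater, c2 = 0 impossible since f separates
      rcases eq_or_lt_of_le hc2np with heq2 | hlt2
      · have := hf1 (-1, 1) ⟨by norm_num, one_pos⟩
        rw [hf] at this
        rw [← heq, ← heq2] at this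
        linarith
      · obtain ⟨x, hx⟩ := slater
        have := hKf x
        rw [← heq] at this
        nlinarith
    · exact hlt
  refine ⟨-c2 / c1, div_nonneg (by linarith) (le_of_lt hc1pos), fun x => ?_⟩
  have h2 : 0 ≤ c1 * qf P x + c2 * qf Q x := le_trans hσnn (hKf x)
  have h3 : qf P x - (-c2 / c1) * qf Q x = (c1 * qf P x + c2 * qf Q x) / c1 := by
    field_simp
    ring
  rw [h3]
  exact div_nonneg h2 hc1pos.le


/-- quadratic form of a bordered block matrix -/
lemma qf_block {m : ℕ} (M : Matrix (Fin m) (Fin m) ℝ) (w : Fin m → ℝ) (c : ℝ)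
    (x : Fin m → ℝ) (t : ℝ) :
    qf (fromBlocks M (replicateCol (Fin 1) w) (replicateRow (Fin 1) w) (of fun _ _ => c))
      (Sum.elim x fun _ => t) =
    x ⬝ᵥ (M *ᵥ x) + 2 * t * (w ⬝ᵥ x) + c * t ^ 2 := by
  rw [qf]
  have hx : (Sum.elim x fun _ : Fin 1 => t) ∘ Sum.inl = x := rfl
  have ht : (Sum.elim x fun _ : Fin 1 => t) ∘ Sum.inr = fun _ => t := rfl
  rw [fromBlocks_mulVec, hx, ht]
  have h1 : (replicateCol (Fin 1) w) *ᵥ (fun _ => t) = t • w := by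
    ext i; simp [mulVec, dotProduct, replicateCol, Fin.sum_univ_one, mul_comm]
  have h2 : (replicateRow (Fin 1) w) *ᵥ x = fun _ => w ⬝ᵥ x := by
    ext i; simp [mulVec, dotProduct, replicateRow]
  have h3 : (of fun _ _ : Fin 1 => c) *ᵥ (fun _ => t) = fun _ => c * t := by
    ext i; simp [mulVec, dotProduct, Fin.sum_univ_one]
  rw [h1, h2, h3]
  have : Sum.elim x (fun _ : Fin 1 => t) = x ⊕ᵥ (fun _ => t) := rfl
  rw [this, sumElim_dotProduct_sumElim]
  have h4 : (fun _ : Fin 1 => t) ⬝ᵥ ((fun _ => w ⬝ᵥ x) + fun _ => c * t)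
      = t * (w ⬝ᵥ x + c * t) := by
    simp [dotProduct, Fin.sum_univ_one]
  rw [h4, dotProduct_add, dotProduct_smul, smul_eq_mul, dotProduct_comm x w]
  ring

lemma quad_expand {m : ℕ} (M : Matrix (Fin m) (Fin m) ℝ) (w : Fin m → ℝ) (c : ℝ)
    (p q : Fin m → ℝ) (s : ℝ) :
    (p + s • q) ⬝ᵥ (M *ᵥ (p + s • q)) + 2 * (w ⬝ᵥ (p + s • q)) + c =
      (p ⬝ᵥ (M *ᵥ p) + 2 * (w ⬝ᵥ p) + c)
        + s * (p ⬝ᵥ (M *ᵥ q) + q ⬝ᵥ (M *ᵥ p) + 2 * (w ⬝ᵥ q))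
        + s ^ 2 * (q ⬝ᵥ (M *ᵥ q)) := by
  simp only [mulVec_add, mulVec_smul, dotProduct_add, add_dotProduct,
    dotProduct_smul, smul_dotProduct, smul_eq_mul]
  ring

lemma sum_decomp {m : ℕ} (z : Fin m ⊕ Fin 1 → ℝ) :
    z = Sum.elim (z ∘ Sum.inl) (fun _ => z (Sum.inr 0)) := by
  funext i
  rcases i with i | j
  · rfl
  · have : j = 0 := Subsingleton.elim _ _
    rw [this]; rfl

lemma block_alg {m : ℕ} (A B : Matrix (Fin m) (Fin m) ℝ) (a b : Fin m → ℝ) (α β l : ℝ)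
    (x : Fin m → ℝ) (t : ℝ) :
    x ⬝ᵥ ((A - l • B) *ᵥ x) + 2 * t * ((a - l • b) ⬝ᵥ x) + (α - l * β) * t ^ 2 =
      (x ⬝ᵥ (A *ᵥ x) + 2 * t * (a ⬝ᵥ x) + α * t ^ 2)
        - l * (x ⬝ᵥ (B *ᵥ x) + 2 * t * (b ⬝ᵥ x) + β * t ^ 2) := by
  simp only [sub_mulVec, smul_mulVec, dotProduct_sub, dotProduct_smul,
    sub_dotProduct, smul_dotProduct, smul_eq_mul]
  ring

theorem s_lemma {m : ℕ}
    (A B : Matrix (Fin m) (Fin m) ℝ) (a b : Fin m → ℝ) (α β : ℝ)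
    (hA : A.IsSymm) (hB : B.IsSymm)
    (slater : ∃ u : Fin m → ℝ, 0 < u ⬝ᵥ (B *ᵥ u) + 2 * (b ⬝ᵥ u) + β) :
    (∀ u : Fin m → ℝ, 0 ≤ u ⬝ᵥ (B *ᵥ u) + 2 * (b ⬝ᵥ u) + β →
        0 ≤ u ⬝ᵥ (A *ᵥ u) + 2 * (a ⬝ᵥ u) + α) ↔
    ∃ l : ℝ, 0 ≤ l ∧
      (Matrix.fromBlocks (A - l • B) (Matrix.replicateCol (Fin 1) (a - l • b))
        (Matrix.replicateRow (Fin 1) (a - l • b))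
        (Matrix.of fun _ _ => α - l * β)).PosSemidef := by
  constructor
  · intro h
    set MA : Matrix (Fin m ⊕ Fin 1) (Fin m ⊕ Fin 1) ℝ :=
      fromBlocks A (replicateCol (Fin 1) a) (replicateRow (Fin 1) a) (of fun _ _ => α) with hMA
    set MB : Matrix (Fin m ⊕ Fin 1) (Fin m ⊕ Fin 1) ℝ :=
      fromBlocks B (replicateCol (Fin 1) b) (replicateRow (Fin 1) b) (of fun _ _ => β) with hMB
    have slater' : ∃ z, 0 < qf MB z := by
      obtain ⟨u, hu⟩ := slater
      refine ⟨Sum.elim u fun _ => 1, ?_⟩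
      rw [hMB, qf_block]
      nlinarith
    have hyp' : ∀ z, 0 ≤ qf MB z → 0 ≤ qf MA z := by
      intro z hz
      rw [sum_decomp z] at hz ⊢
      set x : Fin m → ℝ := z ∘ Sum.inl
      set t : ℝ := z (Sum.inr 0)
      rw [hMB, qf_block] at hz
      rw [hMA, qf_block]
      by_cases hT : t = 0
      · -- boundary case t = 0
        rw [hT] at hz ⊢
        simp only [mul_zero, zero_mul, add_zero, zero_pow, ne_eq, OfNat.ofNat_ne_zero,
          not_false_eq_true] at hz ⊢
        -- hz : 0 ≤ x ⬝ᵥ B *ᵥ x ; goal : 0 ≤ x ⬝ᵥ A *ᵥ x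
        by_contra hAx
        push_neg at hAx
        obtain ⟨u₀, hu₀⟩ := slater
        set cB : ℝ := u₀ ⬝ᵥ (B *ᵥ x) + x ⬝ᵥ (B *ᵥ u₀) + 2 * (b ⬝ᵥ x) with hcB
        set cA : ℝ := u₀ ⬝ᵥ (A *ᵥ x) + x ⬝ᵥ (A *ᵥ u₀) + 2 * (a ⬝ᵥ x) with hcA
        set ε : ℝ := if 0 ≤ cB then 1 else -1 with hε
        have hε2 : ε ^ 2 = 1 := by rw [hε]; split <;> norm_num
        have hεcB : 0 ≤ ε * cB := by
          rw [hε]; split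
          · simpa
          · push_neg at *; nlinarith
        have key : ∀ r : ℝ, 0 ≤ r →
            0 ≤ (u₀ ⬝ᵥ (A *ᵥ u₀) + 2 * (a ⬝ᵥ u₀) + α) + (ε * r) * cA
              + r ^ 2 * (x ⬝ᵥ (A *ᵥ x)) := by
          intro r hr
          have hg : 0 ≤ (u₀ + (ε * r) • x) ⬝ᵥ (B *ᵥ (u₀ + (ε * r) • x))
              + 2 * (b ⬝ᵥ (u₀ + (ε * r) • x)) + β := by
            rw [quad_expand]
            have h1 : 0 ≤ (ε * r) * cB := by
              have : (ε * r) * cB = r * (ε * cB) := by ring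
              rw [this]
              exact mul_nonneg hr hεcB
            have h2 : 0 ≤ (ε * r) ^ 2 * (x ⬝ᵥ (B *ᵥ x)) := by
              apply mul_nonneg (sq_nonneg _) hz
            rw [hcB] at h1
            nlinarith
          have := h _ hg
          rw [quad_expand] at this
          have hsq : (ε * r) ^ 2 = r ^ 2 := by
            rw [mul_pow, hε2, one_mul]
          rw [hsq] at this
          rw [hcA]
          linarith
        -- pick a large r to contradict hAx
        set N : ℝ := -(x ⬝ᵥ (A *ᵥ x)) with hN
        have hNpos : 0 < N := by rw [hN]; linarith
        set F : ℝ := u₀ ⬝ᵥ (A *ᵥ u₀) + 2 * (a ⬝ᵥ u₀) + α with hF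
        set r : ℝ := max 1 ((|F| + |cA| + 1) / N) with hr
        have hr1 : 1 ≤ r := le_max_left _ _
        have hr0 : 0 ≤ r := by linarith
        have hrN : |F| + |cA| + 1 ≤ r * N := by
          have := le_max_right 1 ((|F| + |cA| + 1) / N)
          calc |F| + |cA| + 1 = ((|F| + |cA| + 1) / N) * N := by
                field_simp
            _ ≤ r * N := by
                apply mul_le_mul_of_nonneg_right this hNpos.le
        have hkey := key r hr0
        have hεcA : (ε * r) * cA ≤ r * |cA| := by
          have h5 : ε * cA ≤ |cA| := by
            rw [hε]; split
            · nlinarith [le_abs_self cA]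
            · nlinarith [neg_abs_le cA]
          calc (ε * r) * cA = r * (ε * cA) := by ring
            _ ≤ r * |cA| := mul_le_mul_of_nonneg_left h5 hr0
        have hFabs : F ≤ |F| := le_abs_self F
        nlinarith [mul_le_mul_of_nonneg_left hrN hr0, abs_nonneg F, abs_nonneg cA]
      · -- t ≠ 0 : scale to t = 1
        set u : Fin m → ℝ := t⁻¹ • x with hu
        have hxu : x = t • u := by
          rw [hu, smul_smul, mul_inv_cancel₀ hT, one_smul]
        rw [hxu] at hz ⊢
        simp only [mulVec_smul, smul_dotProduct, dotProduct_smul, smul_eq_mul] at hz ⊢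
        have ht2 : 0 < t ^ 2 := by positivity
        have hg : 0 ≤ u ⬝ᵥ (B *ᵥ u) + 2 * (b ⬝ᵥ u) + β := by
          by_contra hG
          push_neg at hG
          nlinarith
        have hf := h u hg
        nlinarith
    obtain ⟨l, hl, hpsd⟩ := homog_s_lemma MA MB slater' hyp'
    refine ⟨l, hl, posSemidef_iff_dotProduct_mulVec.mpr ⟨?_, ?_⟩⟩
    · -- Hermitian
      rw [Matrix.IsHermitian, conjTranspose_eq_transpose_of_trivial,
        fromBlocks_transpose, transpose_replicateCol, transpose_replicateRow]
      have h11 : (A - l • B)ᵀ = A - l • B := by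
        rw [transpose_sub, transpose_smul, hA, hB]
      have h22 : (of fun _ _ : Fin 1 => α - l * β)ᵀ = of fun _ _ => α - l * β := by
        ext i j; rfl
      rw [h11, h22]
    · -- quadratic form nonneg
      intro z
      have hq := hpsd z
      have hzz : star z ⬝ᵥ
          ((fromBlocks (A - l • B) (replicateCol (Fin 1) (a - l • b)) (replicateRow (Fin 1) (a - l • b))
            (of fun _ _ => α - l * β)) *ᵥ z) =
          qf (fromBlocks (A - l • B) (replicateCol (Fin 1) (a - l • b)) (replicateRow (Fin 1) (a - l • b))
            (of fun _ _ => α - l * β)) z := by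
        rw [qf, star_trivial]
      rw [hzz, sum_decomp z]
      rw [sum_decomp z] at hq
      rw [hMA, hMB, qf_block, qf_block] at hq
      rw [qf_block, block_alg]
      exact hq
  · -- easy direction
    rintro ⟨l, hl, hpsd⟩ u hg
    have hq := hpsd.dotProduct_mulVec_nonneg (Sum.elim u fun _ : Fin 1 => 1)
    have hval : star (Sum.elim u fun _ : Fin 1 => (1:ℝ)) ⬝ᵥ
        ((fromBlocks (A - l • B) (replicateCol (Fin 1) (a - l • b)) (replicateRow (Fin 1) (a - l • b))
          (of fun _ _ => α - l * β)) *ᵥ (Sum.elim u fun _ : Fin 1 => 1)) =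
        qf (fromBlocks (A - l • B) (replicateCol (Fin 1) (a - l • b)) (replicateRow (Fin 1) (a - l • b))
          (of fun _ _ => α - l * β)) (Sum.elim u fun _ : Fin 1 => 1) := by
      rw [qf, star_trivial]
    rw [hval, qf_block, block_alg] at hq
    have hlg : 0 ≤ l * (u ⬝ᵥ (B *ᵥ u) + 2 * (b ⬝ᵥ u) + β) := mul_nonneg hl hg
    nlinarith
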